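/- Let $G$ be a self-similar subgroup of $\mathrm{Aut}(\mathcal{T}_3)$ acting transitively on every level of the ternary rooted tree. Then $G$ has no nontrivial normal subgroup in which every nontrivial element has order $2$. -/

import Mathlib

/-- An automorphism of the `d`-regular rooted tree, viewed as a permutation of the vertex set
`(Fin d)*` preserving lengths and the parent relation. -/
def IsTreeAut {d : ℕ} (g : Equiv.Perm (List (Fin d))) : Prop :=
  (∀ v : List (Fin d), (g v).length = v.length) ∧
  (∀ (v : List (Fin d)) (x : Fin d), ∃ y : Fin d, g (v ++ [x]) = g v ++ [y])

private lemma fin3_cases (a x y z : Fin 3) (hxy : x ≠ y) (hxz : x ≠ z) (hyz : y ≠ z) :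
    a = x ∨ a = y ∨ a = z := by revert a x y z; decide

private lemma fin3_third (x y : Fin 3) (h : x ≠ y) : ∃ z, z ≠ x ∧ z ≠ y := by
  revert x y; decide


/-- A self-similar group of automorphisms of the ternary rooted tree acting transitively on every
level has no nontrivial normal subgroup all of whose elements have order dividing `2`. -/
theorem no_normal_elementary_two_subgroup
    (G : Subgroup (Equiv.Perm (List (Fin 3))))
    (hGaut : ∀ f ∈ G, IsTreeAut f)
    (hself : ∀ f ∈ G, ∀ i : Fin 3, ∃ f' ∈ G, ∀ w : List (Fin 3), f (i :: w) = f [i] ++ f' w)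
    (htrans : ∀ v w : List (Fin 3), v.length = w.length → ∃ f ∈ G, f v = w) :
    ∀ H : Subgroup G, H.Normal → (∀ x ∈ H, x ^ 2 = 1) → H = ⊥ := by
  intro H hN hexp
  by_contra hne
  classical
  obtain ⟨a, ha⟩ := Subgroup.ne_bot_iff_exists_ne_one.mp hne
  set h : Equiv.Perm (List (Fin 3)) := ((a : G) : Equiv.Perm (List (Fin 3))) with hh
  have hmemG : h ∈ G := (a : G).2
  -- h ∘ h = id
  have hsq : ∀ w, h (h w) = w := by
    intro w
    have h1 : (a : G) ^ 2 = 1 := hexp (a : G) a.2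
    have h2 : h ^ 2 = 1 := by
      have := congrArg (fun q : G => (q : Equiv.Perm (List (Fin 3)))) h1
      simpa using this
    have := Equiv.ext_iff.mp h2 w
    simpa [sq, Equiv.Perm.mul_apply] using this
  -- h ≠ 1 as a permutation
  have hne1 : h ≠ 1 := by
    intro hc
    apply ha
    have h1 : (a : G) = 1 := Subtype.ext (by simpa [hh] using hc)
    exact Subtype.ext h1
  have hexv : ∃ n, ∃ v : List (Fin 3), v.length = n ∧ h v ≠ v := by
    by_contra hc
    push_neg at hc
    apply hne1
    apply Equiv.ext
    intro w
    simpa using hc w.length w rfl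
  set n := Nat.find hexv with hn
  obtain ⟨v, hvlen, hv⟩ := Nat.find_spec hexv
  have hmin : ∀ w : List (Fin 3), w.length < n → h w = w := by
    intro w hw
    by_contra hcon
    rw [hn] at hw
    exact Nat.find_min hexv hw ⟨w, rfl, hcon⟩
  have hvne : v ≠ [] := by
    intro hc
    apply hv
    subst hc
    have := (hGaut h hmemG).1 []
    exact List.length_eq_zero_iff.mp (by simpa using this)
  set u := v.dropLast with hu'
  set x := v.getLast hvne with hx'
  have hvx : u ++ [x] = v := List.dropLast_append_getLast hvne
  have hulen : u.length < n := by
    rw [hn, ← hvlen]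
    have h0 : 0 < v.length := List.length_pos_iff.mpr hvne
    have : u.length = v.length - 1 := by simp [hu', List.length_dropLast]
    omega
  have hu : h u = u := hmin u hulen
  -- cancellation helper
  have cancel : ∀ (c d : Fin 3), u ++ [c] = u ++ [d] → c = d := by
    intro c d hcd
    have := List.append_cancel_left hcd
    simpa using this
  -- h (u ++ [x]) = u ++ [y]
  obtain ⟨y, hy0⟩ := (hGaut h hmemG).2 u x
  rw [hu] at hy0
  have hyx : y ≠ x := fun hc => hv (by rw [← hvx, hy0, hc])
  have hxy : x ≠ y := fun hc => hyx hc.symm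
  -- h (u ++ [y]) = u ++ [x]
  have hy1 : h (u ++ [y]) = u ++ [x] := by
    have := hsq (u ++ [x]); rwa [hy0] at this
  obtain ⟨z, hzx, hzy⟩ := fin3_third x y hxy
  -- h fixes u ++ [z]
  have hz0 : h (u ++ [z]) = u ++ [z] := by
    obtain ⟨w0, hw0⟩ := (hGaut h hmemG).2 u z
    rw [hu] at hw0
    have hw0y : w0 ≠ y := by
      intro hc
      rw [hc, ← hy0] at hw0
      exact hzx (cancel _ _ (h.injective hw0))
    have hw0x : w0 ≠ x := by
      intro hc
      rw [hc, ← hy1] at hw0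
      exact hzy (cancel _ _ (h.injective hw0))
    rcases fin3_cases w0 x y z hxy (fun hc => hzx hc.symm) (fun hc => hzy hc.symm) with
      h1 | h1 | h1
    · exact absurd h1 hw0x
    · exact absurd h1 hw0y
    · rw [hw0, h1]
  -- get g with g (u ++ [x]) = u ++ [z]
  obtain ⟨g, hgG, hgx⟩ := htrans (u ++ [x]) (u ++ [z]) (by simp)
  -- g fixes u
  have hgu : g u = u := by
    obtain ⟨x', hx2⟩ := (hGaut g hgG).2 u x
    rw [hgx] at hx2
    have hlen : (g u).length = u.length := (hGaut g hgG).1 u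
    exact (List.append_inj hx2 hlen.symm).1.symm
  -- g (u ++ [y]) = u ++ [t]
  obtain ⟨t, ht0⟩ := (hGaut g hgG).2 u y
  rw [hgu] at ht0
  have htz : t ≠ z := by
    intro hc
    rw [hc, ← hgx] at ht0
    exact hxy (cancel _ _ (g.injective ht0)).symm
  -- the element m = a * (g * a * g⁻¹) lies in H and squares to 1
  let gg : G := ⟨g, hgG⟩
  let m : G := (a : G) * (gg * (a : G) * gg⁻¹)
  have hmH : m ∈ H := H.mul_mem a.2 (hN.conj_mem (a : G) a.2 gg)
  have hmsq : ∀ w, h (g (h (g⁻¹ (h (g (h (g⁻¹ w))))))) = w := by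
    intro w
    have h1 : m ^ 2 = 1 := hexp m hmH
    have h2 : ((m : G) : Equiv.Perm (List (Fin 3))) ^ 2 = 1 := by
      have := congrArg (fun q : G => (q : Equiv.Perm (List (Fin 3)))) h1
      simpa using this
    have h3 : ((m : G) : Equiv.Perm (List (Fin 3))) = h * (g * h * g⁻¹) := rfl
    rw [h3] at h2
    have := Equiv.ext_iff.mp h2 w
    simpa [sq, Equiv.Perm.mul_apply] using this
  have ginv : ∀ w w' : List (Fin 3), g w' = w → g⁻¹ w = w' := by
    intro w w' hw
    rw [← hw]
    exact g.symm_apply_apply w'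
  rcases fin3_cases t x y z hxy (fun hc => hzx hc.symm) (fun hc => hzy hc.symm) with
    htx | hty | htz'
  · -- case g (u ++ [y]) = u ++ [x]
    rw [htx] at ht0
    have e1 : g⁻¹ (u ++ [x]) = u ++ [y] := ginv _ _ ht0
    have e2 : g⁻¹ (u ++ [z]) = u ++ [x] := ginv _ _ hgx
    have key := hmsq (u ++ [x])
    simp only [e1, hy1, hgx, hz0, e2, hy0, ht0] at key
    exact hyx (cancel _ _ key)
  · -- case g (u ++ [y]) = u ++ [y]
    rw [hty] at ht0
    -- g (u ++ [z]) = u ++ [x]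
    have hgz : g (u ++ [z]) = u ++ [x] := by
      obtain ⟨w0, hw0⟩ := (hGaut g hgG).2 u z
      rw [hgu] at hw0
      have hw0z : w0 ≠ z := by
        intro hc
        rw [hc] at hw0
        have := hw0.trans hgx.symm
        exact hzx (cancel _ _ (g.injective this))
      have hw0y : w0 ≠ y := by
        intro hc
        rw [hc, ← ht0] at hw0
        exact hzy (cancel _ _ (g.injective hw0))
      rcases fin3_cases w0 x y z hxy (fun hc => hzx hc.symm) (fun hc => hzy hc.symm) with
        h1 | h1 | h1
      · rw [hw0, h1]
      · exact absurd h1 hw0y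
      · exact absurd h1 hw0z
    have e1 : g⁻¹ (u ++ [x]) = u ++ [z] := ginv _ _ hgz
    have e2 : g⁻¹ (u ++ [y]) = u ++ [y] := ginv _ _ ht0
    have key := hmsq (u ++ [x])
    simp only [e1, hz0, hgz, hy0, e2, hy1, hgx] at key
    exact hzx (cancel _ _ key)
  · exact absurd htz' htz
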